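/- Let $a_{per}, c_{per} : \mathbb{R} \to \mathbb{R}$ be measurable 1-periodic functions with $0 < \alpha \le a_{per}(x) \le \beta$ and $0 < \alpha \le a_{per}(x) + c_{per}(x) \le \beta$ for a.e. $x$. Define $a_\eta^* = \left( (1-\eta)\int_{-1/2}^{1/2} \frac{1}{a_{per}} + \eta \int_{-1/2}^{1/2} \frac{1}{a_{per}+c_{per}} \right)^{-1}$ and $a_{per}^* = \left(\int_{-1/2}^{1/2} \frac{1}{a_{per}}\right)^{-1}$. Then as $\eta \to 0$, $a_\eta^* = a_{per}^* + \eta\, (a_{per}^*)^2 \int_{-1/2}^{1/2} \frac{c_{per}}{a_{per}(a_{per}+c_{per})} + \eta^2 (a_{per}^*)^3 \left(\int_{-1/2}^{1/2} \frac{c_{per}}{a_{per}(a_{per}+c_{per})}\right)^2 + O(\eta^3)$. -/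

import Mathlib

open MeasureTheory Filter Asymptotics Topology

lemma aux_intInt (f : ℝ → ℝ) (α : ℝ) (hα : 0 < α) (hf : Measurable f)
    (hb : ∀ᵐ x : ℝ, α ≤ f x) :
    IntervalIntegrable (fun x => (f x)⁻¹) volume (-(1/2)) (1/2) := by
  rw [intervalIntegrable_iff]
  apply Integrable.mono' (g := fun _ => α⁻¹)
  · exact (integrableOn_const measure_Ioc_lt_top.ne)
  · exact hf.inv.aestronglyMeasurable.restrict
  · filter_upwards [ae_restrict_of_ae hb] with x hx
    rw [Real.norm_eq_abs, abs_inv, abs_of_pos (hα.trans_le hx)]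
    exact inv_anti₀ hα hx

lemma aux_intLB (f : ℝ → ℝ) (α β : ℝ) (hα : 0 < α) (hf : Measurable f)
    (hb : ∀ᵐ x : ℝ, α ≤ f x ∧ f x ≤ β) :
    β⁻¹ ≤ ∫ x in (-(1/2) : ℝ)..(1/2), (f x)⁻¹ := by
  have hβ : 0 < β := by
    obtain ⟨x, hx⟩ := hb.exists
    exact hα.trans_le (hx.1.trans hx.2)
  have h1 : (β⁻¹ : ℝ) = ∫ _ in (-(1/2) : ℝ)..(1/2), β⁻¹ := by
    simp; ring
  rw [h1]
  apply intervalIntegral.integral_mono_ae (by norm_num)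
    intervalIntegrable_const
    (aux_intInt f α hα hf (hb.mono fun x hx => hx.1))
  filter_upwards [hb] with x hx
  exact inv_anti₀ (hα.trans_le hx.1) hx.2

theorem stmt_0 (aper cper : ℝ → ℝ) (α β : ℝ) (hα : 0 < α)
    (hmeas : Measurable aper) (hmeasc : Measurable cper)
    (hper : ∀ x : ℝ, aper (x + 1) = aper x)
    (hperc : ∀ x : ℝ, cper (x + 1) = cper x)
    (hbound : ∀ᵐ x : ℝ, α ≤ aper x ∧ aper x ≤ β)
    (hbound' : ∀ᵐ x : ℝ, α ≤ aper x + cper x ∧ aper x + cper x ≤ β) :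
    (fun η : ℝ =>
        ((1 - η) * (∫ x in (-(1/2) : ℝ)..(1/2), (aper x)⁻¹)
          + η * (∫ x in (-(1/2) : ℝ)..(1/2), (aper x + cper x)⁻¹))⁻¹
        - ((∫ x in (-(1/2) : ℝ)..(1/2), (aper x)⁻¹)⁻¹
          + η * ((∫ x in (-(1/2) : ℝ)..(1/2), (aper x)⁻¹)⁻¹) ^ 2
              * (∫ x in (-(1/2) : ℝ)..(1/2), cper x / (aper x * (aper x + cper x)))
          + η ^ 2 * ((∫ x in (-(1/2) : ℝ)..(1/2), (aper x)⁻¹)⁻¹) ^ 3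
              * (∫ x in (-(1/2) : ℝ)..(1/2), cper x / (aper x * (aper x + cper x))) ^ 2))
      =O[𝓝[Set.Icc (0:ℝ) 1] 0] fun η : ℝ => η ^ 3 := by
  set A := ∫ x in (-(1/2) : ℝ)..(1/2), (aper x)⁻¹ with hAdef
  set B := ∫ x in (-(1/2) : ℝ)..(1/2), (aper x + cper x)⁻¹ with hBdef
  set C := ∫ x in (-(1/2) : ℝ)..(1/2), cper x / (aper x * (aper x + cper x)) with hCdef
  have hβ : 0 < β := by
    obtain ⟨x, hx⟩ := hbound.exists
    exact hα.trans_le (hx.1.trans hx.2)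
  have hA : β⁻¹ ≤ A := aux_intLB aper α β hα hmeas hbound
  have hB : β⁻¹ ≤ B := aux_intLB (fun x => aper x + cper x) α β hα (hmeas.add hmeasc) hbound'
  have hβi : (0:ℝ) < β⁻¹ := inv_pos.2 hβ
  have hApos : 0 < A := hβi.trans_le hA
  -- C = A - B
  have hIa : IntervalIntegrable (fun x => (aper x)⁻¹) volume (-(1/2)) (1/2) :=
    aux_intInt aper α hα hmeas (hbound.mono fun x hx => hx.1)
  have hIb : IntervalIntegrable (fun x => (aper x + cper x)⁻¹) volume (-(1/2)) (1/2) :=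
    aux_intInt _ α hα (hmeas.add hmeasc) (hbound'.mono fun x hx => hx.1)
  have hCAB : C = A - B := by
    rw [hCdef, hAdef, hBdef, ← intervalIntegral.integral_sub hIa hIb]
    apply intervalIntegral.integral_congr_ae
    filter_upwards [hbound, hbound'] with x hx hx'
    intro _
    have h1 : aper x ≠ 0 := (hα.trans_le hx.1).ne'
    have h2 : aper x + cper x ≠ 0 := (hα.trans_le hx'.1).ne'
    field_simp
    ring
  rw [isBigO_iff]
  refine ⟨|C| ^ 3 * β ^ 4, ?_⟩
  filter_upwards [self_mem_nhdsWithin] with η hη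
  have hη0 : 0 ≤ η := hη.1
  have hη1 : η ≤ 1 := hη.2
  have hD : β⁻¹ ≤ (1 - η) * A + η * B := by
    calc β⁻¹ = (1 - η) * β⁻¹ + η * β⁻¹ := by ring
    _ ≤ (1 - η) * A + η * B := by
        gcongr <;> linarith
  have hDpos : 0 < (1 - η) * A + η * B := hβi.trans_le hD
  have key : ((1 - η) * A + η * B)⁻¹ - (A⁻¹ + η * A⁻¹ ^ 2 * C + η ^ 2 * A⁻¹ ^ 3 * C ^ 2)
      = η ^ 3 * (C ^ 3 / (A ^ 3 * ((1 - η) * A + η * B))) := by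
    rw [hCAB]
    field_simp
    ring
  rw [key]
  rw [Real.norm_eq_abs, Real.norm_eq_abs, abs_mul, abs_pow]
  rw [mul_comm (|C| ^ 3 * β ^ 4) (|η| ^ 3)]
  apply mul_le_mul_of_nonneg_left _ (pow_nonneg (abs_nonneg _) 3)
  rw [abs_div, abs_pow]
  have hden : |A ^ 3 * ((1 - η) * A + η * B)| = A ^ 3 * ((1 - η) * A + η * B) :=
    abs_of_pos (by positivity)
  rw [hden]
  have hdenLB : β⁻¹ ^ 3 * β⁻¹ ≤ A ^ 3 * ((1 - η) * A + η * B) := by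
    gcongr
  calc |C| ^ 3 / (A ^ 3 * ((1 - η) * A + η * B)) ≤ |C| ^ 3 / (β⁻¹ ^ 3 * β⁻¹) := by
        gcongr
  _ = |C| ^ 3 * β ^ 4 := by
        rw [inv_pow, ← mul_inv, div_inv_eq_mul, ← pow_succ]
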